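/- The characteristic polynomial of the Jacobian matrix DF(v₁) of F at the virus-free equilibrium v₁ = (1,0,0,0,0,0,0) factors over ℝ as (X + 1)(X + γ₂)(X − (β₁ − β₂))·Q₁(X)·Q₂(X), where Q₁(X) = X² + (αν + γ₁ + μ + ζ)X − ((κ₁ − ν)γ₁ − μν)α + ζ(γ₁ + μ) and Q₂(X) = X² + (αˢνˢ + γˢ + ζˢ)X + (αˢ(νˢ − 1) + ζˢ)γˢ. -/

import Mathlib

open Polynomial in
noncomputable def jacobianMatrix (F : (Fin 7 → ℝ) → (Fin 7 → ℝ)) (p : Fin 7 → ℝ) :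
    Matrix (Fin 7) (Fin 7) ℝ :=
  Matrix.of fun i j => fderiv ℝ (fun v => F v i) p (Pi.single j 1)

private lemma vec7_0 {β : Type*} (a0 a1 a2 a3 a4 a5 a6 : β) : ![a0,a1,a2,a3,a4,a5,a6] (0 : Fin 7) = a0 := rfl
private lemma vec7m_0 {β : Type*} (a0 a1 a2 a3 a4 a5 a6 : β) (h : 0 < 7) : ![a0,a1,a2,a3,a4,a5,a6] (⟨0,h⟩ : Fin 7) = a0 := rfl
private lemma vec7_1 {β : Type*} (a0 a1 a2 a3 a4 a5 a6 : β) : ![a0,a1,a2,a3,a4,a5,a6] (1 : Fin 7) = a1 := rfl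
private lemma vec7m_1 {β : Type*} (a0 a1 a2 a3 a4 a5 a6 : β) (h : 1 < 7) : ![a0,a1,a2,a3,a4,a5,a6] (⟨1,h⟩ : Fin 7) = a1 := rfl
private lemma vec7_2 {β : Type*} (a0 a1 a2 a3 a4 a5 a6 : β) : ![a0,a1,a2,a3,a4,a5,a6] (2 : Fin 7) = a2 := rfl
private lemma vec7m_2 {β : Type*} (a0 a1 a2 a3 a4 a5 a6 : β) (h : 2 < 7) : ![a0,a1,a2,a3,a4,a5,a6] (⟨2,h⟩ : Fin 7) = a2 := rfl
private lemma vec7_3 {β : Type*} (a0 a1 a2 a3 a4 a5 a6 : β) : ![a0,a1,a2,a3,a4,a5,a6] (3 : Fin 7) = a3 := rfl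
private lemma vec7m_3 {β : Type*} (a0 a1 a2 a3 a4 a5 a6 : β) (h : 3 < 7) : ![a0,a1,a2,a3,a4,a5,a6] (⟨3,h⟩ : Fin 7) = a3 := rfl
private lemma vec7_4 {β : Type*} (a0 a1 a2 a3 a4 a5 a6 : β) : ![a0,a1,a2,a3,a4,a5,a6] (4 : Fin 7) = a4 := rfl
private lemma vec7m_4 {β : Type*} (a0 a1 a2 a3 a4 a5 a6 : β) (h : 4 < 7) : ![a0,a1,a2,a3,a4,a5,a6] (⟨4,h⟩ : Fin 7) = a4 := rfl
private lemma vec7_5 {β : Type*} (a0 a1 a2 a3 a4 a5 a6 : β) : ![a0,a1,a2,a3,a4,a5,a6] (5 : Fin 7) = a5 := rfl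
private lemma vec7m_5 {β : Type*} (a0 a1 a2 a3 a4 a5 a6 : β) (h : 5 < 7) : ![a0,a1,a2,a3,a4,a5,a6] (⟨5,h⟩ : Fin 7) = a5 := rfl
private lemma vec7_6 {β : Type*} (a0 a1 a2 a3 a4 a5 a6 : β) : ![a0,a1,a2,a3,a4,a5,a6] (6 : Fin 7) = a6 := rfl
private lemma vec7m_6 {β : Type*} (a0 a1 a2 a3 a4 a5 a6 : β) (h : 6 < 7) : ![a0,a1,a2,a3,a4,a5,a6] (⟨6,h⟩ : Fin 7) = a6 := rfl

open Polynomial in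
set_option maxHeartbeats 1000000 in
private theorem aux_det (α αs β₁ β₂ μ γs γ₁ γ₂ κ₁ κ₂ ν νs ζs ζ : ℝ) :
    (!![X + C 1, C 1, 0, 0, 0, C αs, C α;
        0, X - C (β₁ - β₂), 0, 0, 0, 0, 0;
        0, 0, X + C γs, -C μ, 0, -C αs, 0;
        0, 0, 0, X + C (μ + γ₁), 0, 0, -C α;
        0, 0, 0, 0, X + C γ₂, 0, 0;
        0, 0, -C γs, 0, 0, X + C (νs * αs + ζs), 0;
        0, 0, 0, -C (κ₁ * γ₁), -C (κ₂ * γ₂), 0, X + C (ν * α + ζ)] : Matrix (Fin 7) (Fin 7) ℝ[X]).det =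
      (X + C 1) * (X + C γ₂) * (X - C (β₁ - β₂)) *
        (X ^ 2 + C (α * ν + γ₁ + μ + ζ) * X +
          C (-(((κ₁ - ν) * γ₁ - μ * ν) * α) + ζ * (γ₁ + μ))) *
        (X ^ 2 + C (αs * νs + γs + ζs) * X + C ((αs * (νs - 1) + ζs) * γs)) := by
  have s1 : (!![X + C 1, C 1, 0, 0, 0, C αs, C α;
        0, X - C (β₁ - β₂), 0, 0, 0, 0, 0;
        0, 0, X + C γs, -C μ, 0, -C αs, 0;
        0, 0, 0, X + C (μ + γ₁), 0, 0, -C α;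
        0, 0, 0, 0, X + C γ₂, 0, 0;
        0, 0, -C γs, 0, 0, X + C (νs * αs + ζs), 0;
        0, 0, 0, -C (κ₁ * γ₁), -C (κ₂ * γ₂), 0, X + C (ν * α + ζ)] : Matrix (Fin 7) (Fin 7) ℝ[X]).submatrix (Fin.succAbove 1) (Fin.succAbove 1) = (!![X + C 1, 0, 0, 0, C αs, C α;
        0, X + C γs, -C μ, 0, -C αs, 0;
        0, 0, X + C (μ + γ₁), 0, 0, -C α;
        0, 0, 0, X + C γ₂, 0, 0;
        0, -C γs, 0, 0, X + C (νs * αs + ζs), 0;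
        0, 0, -C (κ₁ * γ₁), -C (κ₂ * γ₂), 0, X + C (ν * α + ζ)] : Matrix (Fin 6) (Fin 6) ℝ[X]) := by
    ext i j; fin_cases i <;> fin_cases j <;> rfl
  have s2 : (!![X + C 1, 0, 0, 0, C αs, C α;
        0, X + C γs, -C μ, 0, -C αs, 0;
        0, 0, X + C (μ + γ₁), 0, 0, -C α;
        0, 0, 0, X + C γ₂, 0, 0;
        0, -C γs, 0, 0, X + C (νs * αs + ζs), 0;
        0, 0, -C (κ₁ * γ₁), -C (κ₂ * γ₂), 0, X + C (ν * α + ζ)] : Matrix (Fin 6) (Fin 6) ℝ[X]).submatrix Fin.succ Fin.succ = (!![X + C γs, -C μ, 0, -C αs, 0;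
        0, X + C (μ + γ₁), 0, 0, -C α;
        0, 0, X + C γ₂, 0, 0;
        -C γs, 0, 0, X + C (νs * αs + ζs), 0;
        0, -C (κ₁ * γ₁), -C (κ₂ * γ₂), 0, X + C (ν * α + ζ)] : Matrix (Fin 5) (Fin 5) ℝ[X]) := by
    ext i j; fin_cases i <;> fin_cases j <;> rfl
  have s3 : (!![X + C γs, -C μ, 0, -C αs, 0;
        0, X + C (μ + γ₁), 0, 0, -C α;
        0, 0, X + C γ₂, 0, 0;
        -C γs, 0, 0, X + C (νs * αs + ζs), 0;
        0, -C (κ₁ * γ₁), -C (κ₂ * γ₂), 0, X + C (ν * α + ζ)] : Matrix (Fin 5) (Fin 5) ℝ[X]).submatrix (Fin.succAbove 2) (Fin.succAbove 2) = (!![X + C γs, -C μ, -C αs, 0;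
        0, X + C (μ + γ₁), 0, -C α;
        -C γs, 0, X + C (νs * αs + ζs), 0;
        0, -C (κ₁ * γ₁), 0, X + C (ν * α + ζ)] : Matrix (Fin 4) (Fin 4) ℝ[X]) := by
    ext i j; fin_cases i <;> fin_cases j <;> rfl
  have e1 : (!![X + C 1, C 1, 0, 0, 0, C αs, C α;
        0, X - C (β₁ - β₂), 0, 0, 0, 0, 0;
        0, 0, X + C γs, -C μ, 0, -C αs, 0;
        0, 0, 0, X + C (μ + γ₁), 0, 0, -C α;
        0, 0, 0, 0, X + C γ₂, 0, 0;
        0, 0, -C γs, 0, 0, X + C (νs * αs + ζs), 0;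
        0, 0, 0, -C (κ₁ * γ₁), -C (κ₂ * γ₂), 0, X + C (ν * α + ζ)] : Matrix (Fin 7) (Fin 7) ℝ[X]).det = (X - C (β₁ - β₂)) * (!![X + C 1, 0, 0, 0, C αs, C α;
        0, X + C γs, -C μ, 0, -C αs, 0;
        0, 0, X + C (μ + γ₁), 0, 0, -C α;
        0, 0, 0, X + C γ₂, 0, 0;
        0, -C γs, 0, 0, X + C (νs * αs + ζs), 0;
        0, 0, -C (κ₁ * γ₁), -C (κ₂ * γ₂), 0, X + C (ν * α + ζ)] : Matrix (Fin 6) (Fin 6) ℝ[X]).det := by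
    rw [Matrix.det_succ_row _ 1]
    simp only [Fin.sum_univ_succ, Fin.sum_univ_zero, Fin.succ_zero_eq_one, Fin.succ_one_eq_two,
      Matrix.cons_val', Matrix.cons_val_zero, Matrix.cons_val_one, Matrix.head_cons,
      Matrix.cons_val_succ, Matrix.head_fin_const, Matrix.empty_val', Matrix.cons_val_fin_one,
      Matrix.of_apply, zero_mul, mul_zero, zero_add, add_zero, neg_zero, s1]
    norm_num
  have e2 : (!![X + C 1, 0, 0, 0, C αs, C α;
        0, X + C γs, -C μ, 0, -C αs, 0;
        0, 0, X + C (μ + γ₁), 0, 0, -C α;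
        0, 0, 0, X + C γ₂, 0, 0;
        0, -C γs, 0, 0, X + C (νs * αs + ζs), 0;
        0, 0, -C (κ₁ * γ₁), -C (κ₂ * γ₂), 0, X + C (ν * α + ζ)] : Matrix (Fin 6) (Fin 6) ℝ[X]).det = (X + C 1) * (!![X + C γs, -C μ, 0, -C αs, 0;
        0, X + C (μ + γ₁), 0, 0, -C α;
        0, 0, X + C γ₂, 0, 0;
        -C γs, 0, 0, X + C (νs * αs + ζs), 0;
        0, -C (κ₁ * γ₁), -C (κ₂ * γ₂), 0, X + C (ν * α + ζ)] : Matrix (Fin 5) (Fin 5) ℝ[X]).det := by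
    rw [Matrix.det_succ_column_zero]
    simp only [Fin.sum_univ_succ, Fin.sum_univ_zero, Fin.succ_zero_eq_one, Fin.succ_one_eq_two,
      Matrix.cons_val', Matrix.cons_val_zero, Matrix.cons_val_one, Matrix.head_cons,
      Matrix.cons_val_succ, Matrix.head_fin_const, Matrix.empty_val', Matrix.cons_val_fin_one,
      Matrix.of_apply, zero_mul, mul_zero, zero_add, add_zero, neg_zero, Fin.succAbove_zero, s2]
    norm_num
  have e3 : (!![X + C γs, -C μ, 0, -C αs, 0;
        0, X + C (μ + γ₁), 0, 0, -C α;
        0, 0, X + C γ₂, 0, 0;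
        -C γs, 0, 0, X + C (νs * αs + ζs), 0;
        0, -C (κ₁ * γ₁), -C (κ₂ * γ₂), 0, X + C (ν * α + ζ)] : Matrix (Fin 5) (Fin 5) ℝ[X]).det = (X + C γ₂) * (!![X + C γs, -C μ, -C αs, 0;
        0, X + C (μ + γ₁), 0, -C α;
        -C γs, 0, X + C (νs * αs + ζs), 0;
        0, -C (κ₁ * γ₁), 0, X + C (ν * α + ζ)] : Matrix (Fin 4) (Fin 4) ℝ[X]).det := by
    rw [Matrix.det_succ_row _ 2]
    simp only [Fin.sum_univ_succ, Fin.sum_univ_zero, Fin.succ_zero_eq_one, Fin.succ_one_eq_two,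
      Matrix.cons_val', Matrix.cons_val_zero, Matrix.cons_val_one, Matrix.head_cons,
      Matrix.cons_val_succ, Matrix.head_fin_const, Matrix.empty_val', Matrix.cons_val_fin_one,
      Matrix.of_apply, zero_mul, mul_zero, zero_add, add_zero, neg_zero, s3]
    norm_num
    simp [Matrix.cons_val]
  have t0 : (!![X + C γs, -C μ, -C αs, 0;
        0, X + C (μ + γ₁), 0, -C α;
        -C γs, 0, X + C (νs * αs + ζs), 0;
        0, -C (κ₁ * γ₁), 0, X + C (ν * α + ζ)] : Matrix (Fin 4) (Fin 4) ℝ[X]).submatrix Fin.succ Fin.succ = (!![X + C (μ + γ₁), 0, -C α;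
        0, X + C (νs * αs + ζs), 0;
        -C (κ₁ * γ₁), 0, X + C (ν * α + ζ)] : Matrix (Fin 3) (Fin 3) ℝ[X]) := by
    ext i j; fin_cases i <;> fin_cases j <;> rfl
  have t1 : (!![X + C γs, -C μ, -C αs, 0;
        0, X + C (μ + γ₁), 0, -C α;
        -C γs, 0, X + C (νs * αs + ζs), 0;
        0, -C (κ₁ * γ₁), 0, X + C (ν * α + ζ)] : Matrix (Fin 4) (Fin 4) ℝ[X]).submatrix Fin.succ (Fin.succAbove 1) = (!![0, 0, -C α;
        -C γs, X + C (νs * αs + ζs), 0;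
        0, 0, X + C (ν * α + ζ)] : Matrix (Fin 3) (Fin 3) ℝ[X]) := by
    ext i j; fin_cases i <;> fin_cases j <;> rfl
  have t2 : (!![X + C γs, -C μ, -C αs, 0;
        0, X + C (μ + γ₁), 0, -C α;
        -C γs, 0, X + C (νs * αs + ζs), 0;
        0, -C (κ₁ * γ₁), 0, X + C (ν * α + ζ)] : Matrix (Fin 4) (Fin 4) ℝ[X]).submatrix Fin.succ (Fin.succAbove 2) = (!![0, X + C (μ + γ₁), -C α;
        -C γs, 0, 0;
        0, -C (κ₁ * γ₁), X + C (ν * α + ζ)] : Matrix (Fin 3) (Fin 3) ℝ[X]) := by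
    ext i j; fin_cases i <;> fin_cases j <;> rfl
  have e4 : (!![X + C γs, -C μ, -C αs, 0;
        0, X + C (μ + γ₁), 0, -C α;
        -C γs, 0, X + C (νs * αs + ζs), 0;
        0, -C (κ₁ * γ₁), 0, X + C (ν * α + ζ)] : Matrix (Fin 4) (Fin 4) ℝ[X]).det =
      (X ^ 2 + C (α * ν + γ₁ + μ + ζ) * X +
          C (-(((κ₁ - ν) * γ₁ - μ * ν) * α) + ζ * (γ₁ + μ))) *
        (X ^ 2 + C (αs * νs + γs + ζs) * X + C ((αs * (νs - 1) + ζs) * γs)) := by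
    rw [Matrix.det_succ_row_zero]
    simp only [Fin.sum_univ_succ, Fin.sum_univ_zero, Fin.succ_zero_eq_one, Fin.succ_one_eq_two,
      Matrix.cons_val', Matrix.cons_val_zero, Matrix.cons_val_one, Matrix.head_cons,
      Matrix.cons_val_succ, Matrix.head_fin_const, Matrix.empty_val', Matrix.cons_val_fin_one,
      Matrix.of_apply, zero_mul, mul_zero, zero_add, add_zero, neg_zero, Fin.succAbove_zero, t0, t1, t2]
    simp [Matrix.det_fin_three, C_add, C_mul, C_sub, C_neg]
    ring
  rw [e1, e2, e3, e4]
  ring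

open Polynomial in
set_option maxHeartbeats 1000000 in
private theorem aux_cm (α αs β₁ β₂ μ γs γ₁ γ₂ κ₁ κ₂ ν νs ζs ζ : ℝ) :
    Matrix.charmatrix (!![-1, -1, 0, 0, 0, -αs, -α;
         0, β₁ - β₂, 0, 0, 0, 0, 0;
         0, 0, -γs, μ, 0, αs, 0;
         0, 0, 0, -(μ + γ₁), 0, 0, α;
         0, 0, 0, 0, -γ₂, 0, 0;
         0, 0, γs, 0, 0, -(νs * αs) - ζs, 0;
         0, 0, 0, κ₁ * γ₁, κ₂ * γ₂, 0, -(ν * α) - ζ] : Matrix (Fin 7) (Fin 7) ℝ) = (!![X + C 1, C 1, 0, 0, 0, C αs, C α;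
        0, X - C (β₁ - β₂), 0, 0, 0, 0, 0;
        0, 0, X + C γs, -C μ, 0, -C αs, 0;
        0, 0, 0, X + C (μ + γ₁), 0, 0, -C α;
        0, 0, 0, 0, X + C γ₂, 0, 0;
        0, 0, -C γs, 0, 0, X + C (νs * αs + ζs), 0;
        0, 0, 0, -C (κ₁ * γ₁), -C (κ₂ * γ₂), 0, X + C (ν * α + ζ)] : Matrix (Fin 7) (Fin 7) ℝ[X]) := by
  refine Matrix.ext fun i j => ?_
  fin_cases i <;> fin_cases j <;>
    simp only [Matrix.charmatrix_apply, Matrix.diagonal_apply, Matrix.of_apply, Fin.reduceEq, reduceIte,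
      Fin.mk.injEq, Nat.reduceEqDiff, if_true, if_false, ite_true, ite_false,
      vec7_0, vec7_1, vec7_2, vec7_3, vec7_4, vec7_5, vec7_6, vec7m_0, vec7m_1, vec7m_2, vec7m_3, vec7m_4, vec7m_5, vec7m_6,
      map_sub, map_add, map_neg, map_mul, map_one, map_zero] <;>
    ring

set_option maxHeartbeats 1000000 in
private theorem aux_jac (α αs β₁ β₂ μ γs γ₁ γ₂ κ₁ κ₂ ν νs ζs ζ : ℝ)
    (F : (Fin 7 → ℝ) → (Fin 7 → ℝ))
    (hF : ∀ v : Fin 7 → ℝ, F v = ![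
      v 0 * (1 - v 0 - v 1) - α * v 0 * v 6 - αs * v 0 * v 5,
      v 1 * (β₁ - β₂ * (v 0 + v 1)) - α * v 1 * v 6,
      αs * v 5 * v 0 + μ * v 3 - γs * v 2,
      α * v 6 * v 0 - (μ + γ₁) * v 3,
      α * v 6 * v 1 - γ₂ * v 4,
      γs * v 2 - νs * αs * v 5 * v 0 - ζs * v 5,
      κ₁ * γ₁ * v 3 + κ₂ * γ₂ * v 4 - ν * α * v 6 * (v 0 + v 1) - ζ * v 6]) :
    jacobianMatrix F ![1, 0, 0, 0, 0, 0, 0] = (!![-1, -1, 0, 0, 0, -αs, -α;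
         0, β₁ - β₂, 0, 0, 0, 0, 0;
         0, 0, -γs, μ, 0, αs, 0;
         0, 0, 0, -(μ + γ₁), 0, 0, α;
         0, 0, 0, 0, -γ₂, 0, 0;
         0, 0, γs, 0, 0, -(νs * αs) - ζs, 0;
         0, 0, 0, κ₁ * γ₁, κ₂ * γ₂, 0, -(ν * α) - ζ] : Matrix (Fin 7) (Fin 7) ℝ) := by
  set p : Fin 7 → ℝ := ![1, 0, 0, 0, 0, 0, 0] with hp
  have hpr : ∀ k : Fin 7, HasFDerivAt (fun v : Fin 7 → ℝ => v k)
      (ContinuousLinearMap.proj k : (Fin 7 → ℝ) →L[ℝ] ℝ) p := fun k => hasFDerivAt_apply k p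
  have h0 : (fun v : Fin 7 → ℝ => F v 0) =
      fun v => v 0 * (1 - v 0 - v 1) - α * v 0 * v 6 - αs * v 0 * v 5 :=
    funext fun v => by rw [hF]; rfl
  have h1 : (fun v : Fin 7 → ℝ => F v 1) =
      fun v => v 1 * (β₁ - β₂ * (v 0 + v 1)) - α * v 1 * v 6 :=
    funext fun v => by rw [hF]; rfl
  have h2 : (fun v : Fin 7 → ℝ => F v 2) =
      fun v => αs * v 5 * v 0 + μ * v 3 - γs * v 2 :=
    funext fun v => by rw [hF]; rfl
  have h3 : (fun v : Fin 7 → ℝ => F v 3) =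
      fun v => α * v 6 * v 0 - (μ + γ₁) * v 3 :=
    funext fun v => by rw [hF]; rfl
  have h4 : (fun v : Fin 7 → ℝ => F v 4) =
      fun v => α * v 6 * v 1 - γ₂ * v 4 :=
    funext fun v => by rw [hF]; rfl
  have h5 : (fun v : Fin 7 → ℝ => F v 5) =
      fun v => γs * v 2 - νs * αs * v 5 * v 0 - ζs * v 5 :=
    funext fun v => by rw [hF]; rfl
  have h6 : (fun v : Fin 7 → ℝ => F v 6) =
      fun v => κ₁ * γ₁ * v 3 + κ₂ * γ₂ * v 4 - ν * α * v 6 * (v 0 + v 1) - ζ * v 6 :=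
    funext fun v => by rw [hF]; rfl
  have d0 := (((hpr 0).mul (((hpr 0).const_sub 1).sub (hpr 1))).sub
      (((hpr 0).const_mul α).mul (hpr 6))).sub (((hpr 0).const_mul αs).mul (hpr 5))
  have d1 := ((hpr 1).mul ((((hpr 0).add (hpr 1)).const_mul β₂).const_sub β₁)).sub
      (((hpr 1).const_mul α).mul (hpr 6))
  have d2 := ((((hpr 5).const_mul αs).mul (hpr 0)).add ((hpr 3).const_mul μ)).sub
      ((hpr 2).const_mul γs)
  have d3 := (((hpr 6).const_mul α).mul (hpr 0)).sub ((hpr 3).const_mul (μ + γ₁))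
  have d4 := (((hpr 6).const_mul α).mul (hpr 1)).sub ((hpr 4).const_mul γ₂)
  have d5 := (((hpr 2).const_mul γs).sub ((((hpr 5).const_mul (νs * αs)).mul (hpr 0)))).sub
      ((hpr 5).const_mul ζs)
  have d6 := ((((hpr 3).const_mul (κ₁ * γ₁)).add ((hpr 4).const_mul (κ₂ * γ₂))).sub
      (((hpr 6).const_mul (ν * α)).mul ((hpr 0).add (hpr 1)))).sub ((hpr 6).const_mul ζ)
  ext i j
  fin_cases i
  · show jacobianMatrix F p 0 j = _
    simp only [jacobianMatrix, Matrix.of_apply]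
    rw [h0, HasFDerivAt.fderiv (f := fun v : Fin 7 → ℝ => v 0 * (1 - v 0 - v 1) - α * v 0 * v 6 - αs * v 0 * v 5) d0]
    fin_cases j <;>
      simp only [hp, Matrix.of_apply, vec7_0, vec7_1, vec7_2, vec7_3, vec7_4, vec7_5, vec7_6,
        ContinuousLinearMap.add_apply, ContinuousLinearMap.sub_apply, ContinuousLinearMap.neg_apply,
        ContinuousLinearMap.smul_apply, ContinuousLinearMap.proj_apply, smul_eq_mul,
        Pi.single_apply] <;>
      simp +decide [vec7_0, vec7_1, vec7_2, vec7_3, vec7_4, vec7_5, vec7_6] <;>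
      first
        | rfl
        | ring_nf
        | norm_num
        | (simp [Matrix.vecHead, Matrix.vecTail]; try ring_nf)
  · show jacobianMatrix F p 1 j = _
    simp only [jacobianMatrix, Matrix.of_apply]
    rw [h1, HasFDerivAt.fderiv (f := fun v : Fin 7 → ℝ => v 1 * (β₁ - β₂ * (v 0 + v 1)) - α * v 1 * v 6) d1]
    fin_cases j <;>
      simp only [hp, Matrix.of_apply, vec7_0, vec7_1, vec7_2, vec7_3, vec7_4, vec7_5, vec7_6,
        ContinuousLinearMap.add_apply, ContinuousLinearMap.sub_apply, ContinuousLinearMap.neg_apply,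
        ContinuousLinearMap.smul_apply, ContinuousLinearMap.proj_apply, smul_eq_mul,
        Pi.single_apply] <;>
      simp +decide [vec7_0, vec7_1, vec7_2, vec7_3, vec7_4, vec7_5, vec7_6] <;>
      first
        | rfl
        | ring_nf
        | norm_num
        | (simp [Matrix.vecHead, Matrix.vecTail]; try ring_nf)
  · show jacobianMatrix F p 2 j = _
    simp only [jacobianMatrix, Matrix.of_apply]
    rw [h2, HasFDerivAt.fderiv (f := fun v : Fin 7 → ℝ => αs * v 5 * v 0 + μ * v 3 - γs * v 2) d2]
    fin_cases j <;>
      simp only [hp, Matrix.of_apply, vec7_0, vec7_1, vec7_2, vec7_3, vec7_4, vec7_5, vec7_6,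
        ContinuousLinearMap.add_apply, ContinuousLinearMap.sub_apply, ContinuousLinearMap.neg_apply,
        ContinuousLinearMap.smul_apply, ContinuousLinearMap.proj_apply, smul_eq_mul,
        Pi.single_apply] <;>
      simp +decide [vec7_0, vec7_1, vec7_2, vec7_3, vec7_4, vec7_5, vec7_6] <;>
      first
        | rfl
        | ring_nf
        | norm_num
        | (simp [Matrix.vecHead, Matrix.vecTail]; try ring_nf)
  · show jacobianMatrix F p 3 j = _
    simp only [jacobianMatrix, Matrix.of_apply]
    rw [h3, HasFDerivAt.fderiv (f := fun v : Fin 7 → ℝ => α * v 6 * v 0 - (μ + γ₁) * v 3) d3]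
    fin_cases j <;>
      simp only [hp, Matrix.of_apply, vec7_0, vec7_1, vec7_2, vec7_3, vec7_4, vec7_5, vec7_6,
        ContinuousLinearMap.add_apply, ContinuousLinearMap.sub_apply, ContinuousLinearMap.neg_apply,
        ContinuousLinearMap.smul_apply, ContinuousLinearMap.proj_apply, smul_eq_mul,
        Pi.single_apply] <;>
      simp +decide [vec7_0, vec7_1, vec7_2, vec7_3, vec7_4, vec7_5, vec7_6] <;>
      first
        | rfl
        | ring_nf
        | norm_num
        | (simp [Matrix.vecHead, Matrix.vecTail]; try ring_nf)
  · show jacobianMatrix F p 4 j = _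
    simp only [jacobianMatrix, Matrix.of_apply]
    rw [h4, HasFDerivAt.fderiv (f := fun v : Fin 7 → ℝ => α * v 6 * v 1 - γ₂ * v 4) d4]
    fin_cases j <;>
      simp only [hp, Matrix.of_apply, vec7_0, vec7_1, vec7_2, vec7_3, vec7_4, vec7_5, vec7_6,
        ContinuousLinearMap.add_apply, ContinuousLinearMap.sub_apply, ContinuousLinearMap.neg_apply,
        ContinuousLinearMap.smul_apply, ContinuousLinearMap.proj_apply, smul_eq_mul,
        Pi.single_apply] <;>
      simp +decide [vec7_0, vec7_1, vec7_2, vec7_3, vec7_4, vec7_5, vec7_6] <;>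
      first
        | rfl
        | ring_nf
        | norm_num
        | (simp [Matrix.vecHead, Matrix.vecTail]; try ring_nf)
  · show jacobianMatrix F p 5 j = _
    simp only [jacobianMatrix, Matrix.of_apply]
    rw [h5, HasFDerivAt.fderiv (f := fun v : Fin 7 → ℝ => γs * v 2 - νs * αs * v 5 * v 0 - ζs * v 5) d5]
    fin_cases j <;>
      simp only [hp, Matrix.of_apply, vec7_0, vec7_1, vec7_2, vec7_3, vec7_4, vec7_5, vec7_6,
        ContinuousLinearMap.add_apply, ContinuousLinearMap.sub_apply, ContinuousLinearMap.neg_apply,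
        ContinuousLinearMap.smul_apply, ContinuousLinearMap.proj_apply, smul_eq_mul,
        Pi.single_apply] <;>
      simp +decide [vec7_0, vec7_1, vec7_2, vec7_3, vec7_4, vec7_5, vec7_6] <;>
      first
        | rfl
        | ring_nf
        | norm_num
        | (simp [Matrix.vecHead, Matrix.vecTail]; try ring_nf)
  · show jacobianMatrix F p 6 j = _
    simp only [jacobianMatrix, Matrix.of_apply]
    rw [h6, HasFDerivAt.fderiv (f := fun v : Fin 7 → ℝ => κ₁ * γ₁ * v 3 + κ₂ * γ₂ * v 4 - ν * α * v 6 * (v 0 + v 1) - ζ * v 6) d6]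
    fin_cases j <;>
      simp only [hp, Matrix.of_apply, vec7_0, vec7_1, vec7_2, vec7_3, vec7_4, vec7_5, vec7_6,
        ContinuousLinearMap.add_apply, ContinuousLinearMap.sub_apply, ContinuousLinearMap.neg_apply,
        ContinuousLinearMap.smul_apply, ContinuousLinearMap.proj_apply, smul_eq_mul,
        Pi.single_apply] <;>
      simp +decide [vec7_0, vec7_1, vec7_2, vec7_3, vec7_4, vec7_5, vec7_6] <;>
      first
        | rfl
        | ring_nf
        | norm_num
        | (simp [Matrix.vecHead, Matrix.vecTail]; try ring_nf)

open Polynomial in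
theorem charpoly_at_virus_free_1
    (α αs β₁ β₂ μ γs γ₁ γ₂ κ₁ κ₂ ν νs ζs ζ : ℝ)
    (hα : 0 < α) (hαs : 0 < αs) (hβ₁pos : 0 < β₁) (hβ₂pos : 0 < β₂)
    (hμ : 0 < μ) (hγs : 0 < γs) (hγ₁ : 0 < γ₁) (hγ₂ : 0 < γ₂)
    (hκ₁ : 0 < κ₁) (hκ₂ : 0 < κ₂) (hν : 0 < ν) (hνs : 0 < νs)
    (hζs : 0 < ζs) (hζ : 0 < ζ)
    (F : (Fin 7 → ℝ) → (Fin 7 → ℝ))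
    (hF : ∀ v : Fin 7 → ℝ, F v = ![
      v 0 * (1 - v 0 - v 1) - α * v 0 * v 6 - αs * v 0 * v 5,
      v 1 * (β₁ - β₂ * (v 0 + v 1)) - α * v 1 * v 6,
      αs * v 5 * v 0 + μ * v 3 - γs * v 2,
      α * v 6 * v 0 - (μ + γ₁) * v 3,
      α * v 6 * v 1 - γ₂ * v 4,
      γs * v 2 - νs * αs * v 5 * v 0 - ζs * v 5,
      κ₁ * γ₁ * v 3 + κ₂ * γ₂ * v 4 - ν * α * v 6 * (v 0 + v 1) - ζ * v 6]) :
    (jacobianMatrix F ![1, 0, 0, 0, 0, 0, 0]).charpoly =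
      (X + C 1) * (X + C γ₂) * (X - C (β₁ - β₂)) *
        (X ^ 2 + C (α * ν + γ₁ + μ + ζ) * X +
          C (-(((κ₁ - ν) * γ₁ - μ * ν) * α) + ζ * (γ₁ + μ))) *
        (X ^ 2 + C (αs * νs + γs + ζs) * X + C ((αs * (νs - 1) + ζs) * γs)) := by
  rw [aux_jac α αs β₁ β₂ μ γs γ₁ γ₂ κ₁ κ₂ ν νs ζs ζ F hF, Matrix.charpoly,
    aux_cm α αs β₁ β₂ μ γs γ₁ γ₂ κ₁ κ₂ ν νs ζs ζ,
    aux_det α αs β₁ β₂ μ γs γ₁ γ₂ κ₁ κ₂ ν νs ζs ζ]
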